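/- (Policy gradient theorem, finite-horizon form) For a finite MDP with horizon T and a positive differentiable stochastic policy π_θ, the gradient of J(θ) = E_{τ∼π_θ}[Σ_{t=0}^{T} γ^t r(s_t,a_t)] satisfies ∇_θ J(θ) = E_{τ∼π_θ}[(Σ_{t=0}^{T} ∇_θ log π_θ(a_t|s_t)) (Σ_{t=0}^{T} γ^t r(s_t,a_t))]. -/

import Mathlib

/-- Policy gradient theorem, finite-horizon form: for a finite MDP with horizon `T` and a
positive, differentiable stochastic policy `π_θ`, the gradient of
`J(θ) = E_{τ∼π_θ}[∑_{t=0}^T γ^t r(s_t,a_t)]` (expectation a finite sum over trajectories,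
with trajectory probability `P_θ(τ) = p(s₀) ∏_t π_θ(a_t|s_t) p(s_{t+1}|s_t,a_t)`) equals
`E_{τ∼π_θ}[(∑_t ∇_θ log π_θ(a_t|s_t)) (∑_t γ^t r(s_t,a_t))]`. -/
theorem stmt13 {d : ℕ} {S A : Type} [Fintype S] [Fintype A]
    (T : ℕ) (γ : ℝ) (hγ : 0 < γ ∧ γ ≤ 1)
    (p0 : S → ℝ) (hp00 : ∀ s, 0 ≤ p0 s) (hp01 : ∑ s, p0 s = 1)
    (ptr : S → A → S → ℝ) (hptr0 : ∀ s a s', 0 ≤ ptr s a s')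
    (hptr1 : ∀ s a, ∑ s', ptr s a s' = 1)
    (r : S → A → ℝ)
    (π : (Fin d → ℝ) → A → S → ℝ)
    (hpos : ∀ θ a s, 0 < π θ a s)
    (hdiff : ∀ a s, Differentiable ℝ (fun θ => π θ a s))
    (θ : Fin d → ℝ) :
    fderiv ℝ (fun θ' => ∑ τ : (Fin (T + 2) → S) × (Fin (T + 1) → A),
        (p0 (τ.1 0) * ∏ t : Fin (T + 1),
            π θ' (τ.2 t) (τ.1 t.castSucc) * ptr (τ.1 t.castSucc) (τ.2 t) (τ.1 t.succ)) *
        (∑ t : Fin (T + 1), γ ^ (t : ℕ) * r (τ.1 t.castSucc) (τ.2 t))) θ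
    = ∑ τ : (Fin (T + 2) → S) × (Fin (T + 1) → A),
        ((p0 (τ.1 0) * ∏ t : Fin (T + 1),
            π θ (τ.2 t) (τ.1 t.castSucc) * ptr (τ.1 t.castSucc) (τ.2 t) (τ.1 t.succ)) *
         (∑ t : Fin (T + 1), γ ^ (t : ℕ) * r (τ.1 t.castSucc) (τ.2 t))) •
        (∑ t : Fin (T + 1),
          fderiv ℝ (fun θ' => Real.log (π θ' (τ.2 t) (τ.1 t.castSucc))) θ) := by
  classical
  -- notation
  set L : ((Fin (T + 2) → S) × (Fin (T + 1) → A)) → Fin (T + 1) →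
      ((Fin d → ℝ) →L[ℝ] ℝ) :=
    fun τ t => fderiv ℝ (fun θ' => π θ' (τ.2 t) (τ.1 t.castSucc)) θ with hL
  -- derivative of each trajectory term
  have hterm : ∀ τ : (Fin (T + 2) → S) × (Fin (T + 1) → A),
      HasFDerivAt (fun θ' =>
        (p0 (τ.1 0) * ∏ t : Fin (T + 1),
            π θ' (τ.2 t) (τ.1 t.castSucc) * ptr (τ.1 t.castSucc) (τ.2 t) (τ.1 t.succ)) *
        (∑ t : Fin (T + 1), γ ^ (t : ℕ) * r (τ.1 t.castSucc) (τ.2 t)))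
        ((∑ t : Fin (T + 1), γ ^ (t : ℕ) * r (τ.1 t.castSucc) (τ.2 t)) •
          (p0 (τ.1 0) •
            (∑ t : Fin (T + 1),
              (∏ j ∈ Finset.univ.erase t,
                (π θ (τ.2 j) (τ.1 j.castSucc) * ptr (τ.1 j.castSucc) (τ.2 j) (τ.1 j.succ))) •
              (ptr (τ.1 t.castSucc) (τ.2 t) (τ.1 t.succ) • L τ t)))) θ := by
    intro τ
    have hprod : HasFDerivAt (fun θ' => ∏ t : Fin (T + 1),
        π θ' (τ.2 t) (τ.1 t.castSucc) * ptr (τ.1 t.castSucc) (τ.2 t) (τ.1 t.succ))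
        (∑ t : Fin (T + 1),
          (∏ j ∈ Finset.univ.erase t,
            (π θ (τ.2 j) (τ.1 j.castSucc) * ptr (τ.1 j.castSucc) (τ.2 j) (τ.1 j.succ))) •
          (ptr (τ.1 t.castSucc) (τ.2 t) (τ.1 t.succ) • L τ t)) θ := by
      apply HasFDerivAt.finset_prod
      intro t _
      exact ((hdiff (τ.2 t) (τ.1 t.castSucc)) θ).hasFDerivAt.mul_const _
    exact (hprod.const_mul (p0 (τ.1 0))).mul_const _
  -- derivative of the sum
  have hsum := HasFDerivAt.fun_sum (fun τ (_ : τ ∈ (Finset.univ :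
      Finset ((Fin (T + 2) → S) × (Fin (T + 1) → A)))) => hterm τ)
  rw [hsum.fderiv]
  -- now compare term by term
  apply Finset.sum_congr rfl
  intro τ _
  -- rewrite fderiv of log
  have hlog : ∀ t : Fin (T + 1),
      fderiv ℝ (fun θ' => Real.log (π θ' (τ.2 t) (τ.1 t.castSucc))) θ
        = (π θ (τ.2 t) (τ.1 t.castSucc))⁻¹ • L τ t := by
    intro t
    exact ((Real.hasDerivAt_log (ne_of_gt (hpos θ (τ.2 t) (τ.1 t.castSucc)))).comp_hasFDerivAt
      θ ((hdiff (τ.2 t) (τ.1 t.castSucc)) θ).hasFDerivAt).fderiv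
  simp only [hlog]
  rw [Finset.smul_sum, Finset.smul_sum, Finset.smul_sum]
  apply Finset.sum_congr rfl
  intro t _
  simp only [smul_smul]
  congr 1
  have hπ : π θ (τ.2 t) (τ.1 t.castSucc) ≠ 0 := ne_of_gt (hpos θ (τ.2 t) (τ.1 t.castSucc))
  have hsplit : (∏ j : Fin (T + 1),
      π θ (τ.2 j) (τ.1 j.castSucc) * ptr (τ.1 j.castSucc) (τ.2 j) (τ.1 j.succ))
      = (π θ (τ.2 t) (τ.1 t.castSucc) * ptr (τ.1 t.castSucc) (τ.2 t) (τ.1 t.succ)) *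
        ∏ j ∈ Finset.univ.erase t,
          (π θ (τ.2 j) (τ.1 j.castSucc) * ptr (τ.1 j.castSucc) (τ.2 j) (τ.1 j.succ)) :=
    (Finset.mul_prod_erase Finset.univ _ (Finset.mem_univ t)).symm
  rw [hsplit]
  field_simp
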